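/- Let (X, δ) be a set with a weak metric whose symmetrization δ_s(x,y) = δ(x,y) + δ(y,x) is a metric, and fix a basepoint x̄. Assume either that all closed balls of (X, δ_s) are compact, or that δ = δ_s/2 and (X, δ_s) is complete. If h is a Busemann point (a horofunction that is the limit of ι(x_α) for an almost-geodesic net x_α, where ι(x)(y) = δ(y,x) − δ(x̄,x)), then δ_s(x̄, x_α) → ∞ for any such almost-geodesic net, and there is no constant a ∈ ℝ such that h ≥ a + δ(·, x̄). -/

import Mathlib

open Filter

private lemma busemann_cluster {X : Type*} [MetricSpace X] {ι : Type*} [Nonempty ι]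
    [SemilatticeSup ι] (δ : X → X → ℝ)
    (htri : ∀ x y z : X, δ x z ≤ δ x y + δ y z)
    (hsym : ∀ x y : X, dist x y = δ x y + δ y x)
    (xb : X) (h : X → ℝ) (xa : ι → X)
    (hconv : ∀ y : X, Tendsto (fun a => δ y (xa a) - δ xb (xa a)) atTop (nhds (h y)))
    (x : X) (hcl : ∀ U ∈ nhds x, ∃ᶠ a in atTop, xa a ∈ U) :
    ∀ y : X, h y = δ y x - δ xb x := by
  have h0 : h xb = 0 := by
    have hz : Tendsto (fun a => δ xb (xa a) - δ xb (xa a)) atTop (nhds 0) := by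
      simpa using (tendsto_const_nhds : Tendsto (fun _ : ι => (0:ℝ)) atTop (nhds 0))
    exact tendsto_nhds_unique (hconv xb) hz
  have upper : ∀ y : X, h y ≤ δ y x + h x := by
    intro y
    have hg : Tendsto (fun a => δ y x + (δ x (xa a) - δ xb (xa a))) atTop
        (nhds (δ y x + h x)) := (hconv x).const_add _
    refine le_of_tendsto_of_tendsto' (hconv y) hg fun a => ?_
    have := htri y x (xa a)
    linarith
  have lower : ∀ y : X, δ y x + h x ≤ h y := by
    intro y
    by_contra hlt
    push_neg at hlt
    set ε : ℝ := (δ y x + h x - h y) / 4 with hεdef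
    have hε : 0 < ε := by simp only [hεdef]; linarith
    have e1 : ∀ᶠ a in atTop, |δ x (xa a) - (h x + δ xb (xa a))| < ε := by
      have := Metric.tendsto_nhds.mp (hconv x) ε hε
      simpa [Real.dist_eq] using this
    have e2 : ∀ᶠ a in atTop, |δ y (xa a) - (h y + δ xb (xa a))| < ε := by
      have := Metric.tendsto_nhds.mp (hconv y) ε hε
      simpa [Real.dist_eq] using this
    have fcl : ∃ᶠ a in atTop, dist (xa a) x < ε := by
      have := hcl (Metric.ball x ε) (Metric.ball_mem_nhds x hε)
      simpa [Metric.mem_ball] using this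
    obtain ⟨a, ha1, ha2, ha3⟩ := (fcl.and_eventually (e1.and e2)).exists
    have t1 := htri y (xa a) x
    have t2 := hsym (xa a) x
    rw [abs_lt] at ha2 ha3
    linarith [ha2.1, ha2.2, ha3.1, ha3.2]
  have hx : h x = -δ xb x := by
    have h1 := upper xb; have h2 := lower xb; linarith
  intro y
  have h1 := upper y; have h2 := lower y
  linarith

theorem stmt15 {X : Type*} [MetricSpace X] {ι : Type*} [Nonempty ι] [SemilatticeSup ι]
    (δ : X → X → ℝ)
    -- δ is a weak metric whose symmetrization is the metric of X
    (htri : ∀ x y z : X, δ x z ≤ δ x y + δ y z)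
    (hsym : ∀ x y : X, dist x y = δ x y + δ y x)
    -- either all closed balls of (X, δ_s) are compact, or δ = δ_s/2 and (X, δ_s) complete
    (hcase : (∀ (x : X) (r : ℝ), IsCompact (Metric.closedBall x r)) ∨
      ((∀ x y : X, δ x y = dist x y / 2) ∧ CompleteSpace X))
    (xb : X) (h : X → ℝ)
    -- h is a horofunction: not of the form ι(x) = δ(·,x) − δ(x̄,x)
    (hhoro : ¬ ∃ x : X, h = fun y => δ y x - δ xb x)
    -- (x_α) is an almost-geodesic net
    (xa : ι → X)
    (halmost : ∀ ε > (0 : ℝ), ∃ A : ι, ∀ a b : ι, A ≤ a → a ≤ b →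
      δ xb (xa a) + δ (xa a) (xa b) - ε ≤ δ xb (xa b))
    -- converging pointwise to h (so h is a Busemann point)
    (hconv : ∀ y : X, Tendsto (fun a => δ y (xa a) - δ xb (xa a)) atTop (nhds (h y))) :
    -- then δ_s(x̄, x_α) → ∞ and no constant a with h ≥ a + δ(·, x̄)
    Tendsto (fun a => dist xb (xa a)) atTop atTop ∧
    ¬ ∃ c : ℝ, ∀ y : X, c + δ y xb ≤ h y := by
  have part1 : Tendsto (fun a => dist xb (xa a)) atTop atTop := by
    by_contra hnot
    rw [tendsto_atTop] at hnot
    push_neg at hnot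
    obtain ⟨R, hR⟩ := hnot
    have hfreq : ∃ᶠ a in atTop, dist xb (xa a) < R := hR
    have hcl : ∃ x : X, ∀ U ∈ nhds x, ∃ᶠ a in atTop, xa a ∈ U := by
      rcases hcase with hcomp | ⟨hδ, hcompl⟩
      · -- compact closed balls
        have hfreqK : ∃ᶠ a in atTop, xa a ∈ Metric.closedBall xb R := by
          refine hfreq.mono fun a ha => ?_
          rw [Metric.mem_closedBall, dist_comm]; exact ha.le
        have hfreqK' : ∃ᶠ y in Filter.map xa atTop, y ∈ Metric.closedBall xb R :=
          Filter.frequently_map.mpr hfreqK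
        haveI hne : (Filter.map xa atTop ⊓ 𝓟 (Metric.closedBall xb R)).NeBot :=
          Filter.frequently_mem_iff_neBot.mp hfreqK'
        obtain ⟨x, _, hx⟩ := (hcomp xb R).exists_clusterPt
          (inf_le_right : Filter.map xa atTop ⊓ 𝓟 (Metric.closedBall xb R) ≤ _)
        have hx' : MapClusterPt x atTop xa := hx.mono inf_le_left
        exact ⟨x, fun U hU => mapClusterPt_iff_frequently.mp hx' U hU⟩
      · -- δ = dist / 2, complete
        haveI := hcompl
        obtain ⟨A1, hA1⟩ := halmost 1 one_pos
        have hbd : ∀ a, A1 ≤ a → dist xb (xa a) ≤ R + 2 := by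
          intro a ha
          obtain ⟨b, hab, hb⟩ := (frequently_atTop.mp hfreq) a
          have h1 := hA1 a b ha hab
          rw [hδ, hδ, hδ] at h1
          have := dist_nonneg (x := xa a) (y := xa b)
          linarith
        have hcauchy : CauchySeq xa := by
          rw [Metric.cauchySeq_iff]
          intro ε hε
          have hε' : 0 < ε / 11 := by linarith
          obtain ⟨A2, hA2⟩ := halmost (ε / 11) hε'
          set A' := A2 ⊔ A1 with hA'
          have hbdd : BddAbove ((fun a => dist xb (xa a)) '' Set.Ici A') := by
            refine ⟨R + 2, ?_⟩
            rintro v ⟨a, ha, rfl⟩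
            exact hbd a (le_trans le_sup_right ha)
          have hne : ((fun a => dist xb (xa a)) '' Set.Ici A').Nonempty :=
            ⟨_, ⟨A', Set.self_mem_Ici, rfl⟩⟩
          set M := sSup ((fun a => dist xb (xa a)) '' Set.Ici A') with hM
          have hlt : M - ε / 11 < M := by linarith
          obtain ⟨v, ⟨a0, ha0, rfl⟩, hv⟩ := exists_lt_of_lt_csSup hne hlt
          have hub : ∀ c, a0 ≤ c → dist xb (xa c) ≤ M :=
            fun c hc => le_csSup hbdd ⟨c, le_trans ha0 hc, rfl⟩
          have hlow : ∀ c, a0 ≤ c → M - 3 * (ε / 11) < dist xb (xa c) := by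
            intro c hc
            have h1 := hA2 a0 c (le_trans le_sup_left ha0) hc
            rw [hδ, hδ, hδ] at h1
            have := dist_nonneg (x := xa a0) (y := xa c)
            linarith
          have hseg : ∀ m, a0 ≤ m → ∀ n, m ≤ n → dist (xa m) (xa n) ≤ 5 * (ε / 11) := by
            intro m hm n hmn
            have h1 := hA2 m n (le_trans (le_trans le_sup_left ha0) hm) hmn
            rw [hδ, hδ, hδ] at h1
            have h2 := hub n (le_trans hm hmn)
            have h3 := hlow m hm
            linarith
          refine ⟨a0, fun m hm n hn => ?_⟩
          have h1 := hseg m hm (m ⊔ n) le_sup_left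
          have h2 := hseg n hn (m ⊔ n) le_sup_right
          have h3 := dist_triangle (xa m) (xa (m ⊔ n)) (xa n)
          rw [dist_comm (xa (m ⊔ n)) (xa n)] at h3
          linarith
        obtain ⟨x, hx⟩ := cauchySeq_tendsto_of_complete hcauchy
        exact ⟨x, fun U hU => Filter.Eventually.frequently (Filter.mem_map.mp (hx hU) : ∀ᶠ a in atTop, xa a ∈ U)⟩
    obtain ⟨x, hx⟩ := hcl
    exact hhoro ⟨x, funext (busemann_cluster δ htri hsym xb h xa hconv x hx)⟩
  refine ⟨part1, ?_⟩
  rintro ⟨c, hc⟩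
  obtain ⟨A, hA⟩ := halmost 1 one_pos
  have key : ∀ a, A ≤ a → dist xb (xa a) ≤ 1 - c := by
    intro a ha
    have hle : h (xa a) ≤ 1 - δ xb (xa a) := by
      refine le_of_tendsto (hconv (xa a)) ?_
      filter_upwards [eventually_ge_atTop a] with b hb
      have := hA a b ha hb
      linarith
    have h1 := hc (xa a)
    have h2 := hsym xb (xa a)
    linarith
  obtain ⟨a, h1, h2⟩ :=
    ((part1.eventually (eventually_gt_atTop (1 - c))).and (eventually_ge_atTop A)).exists
  exact absurd (key a h2) (not_le.mpr h1)
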